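/- For all traces α, β ∈ A* and all domains u ∈ D: if ta^◇_u(α) = ta^◇_u(β) then α ∼ᵘⁿʷ_u β. Consequently, ta^□-security implies ta^◇-security. -/
import Mathlib


open Classical

/-- Binary trees over actions, values of the `ta` purge functions. -/
inductive TATree (A : Type) : Type where
  | eps : TATree A
  | node : TATree A → TATree A → A → TATree A

/-- Run a deterministic system along a trace (newest action at the head of the list). -/
def runL {S A : Type} (step : S → A → S) (s0 : S) : List A → S
  | [] => s0
  | a :: α => step (runL step s0 α) a

/-- The permissive purge function `ta^◇` for a dynamic policy `P`. -/
noncomputable def taD {D A : Type} (dm : A → D) (P : List A → D → D → Prop) :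
    List A → D → TATree A
  | [], _ => TATree.eps
  | a :: α, u =>
    if P α (dm a) u then TATree.node (taD dm P α u) (taD dm P α (dm a)) a
    else taD dm P α u

/-- The unwinding relations: smallest family of equivalence relations on traces
satisfying WSC and DLR with respect to the dynamic policy `P`. -/
inductive Unw {D A : Type} (dm : A → D) (P : List A → D → D → Prop) :
    D → List A → List A → Prop where
  | refl (u : D) (α : List A) : Unw dm P u α α
  | symm {u : D} {α β : List A} : Unw dm P u α β → Unw dm P u β α
  | trans {u : D} {α β γ : List A} : Unw dm P u α β → Unw dm P u β γ → Unw dm P u α γ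
  | dlr (u : D) (α : List A) (a : A) : ¬ P α (dm a) u → Unw dm P u (a :: α) α
  | wsc (u : D) {α β : List A} (a : A) :
      Unw dm P u α β → Unw dm P (dm a) α β → Unw dm P u (a :: α) (a :: β)

/-- The prohibitive purge function `ta^□`, whose condition is distributed knowledge
of the policy edge, interpreted over the Kripke structure given by the unwinding relations. -/
noncomputable def taB {D A : Type} (dm : A → D) (P : List A → D → D → Prop) :
    List A → D → TATree A
  | [], _ => TATree.eps
  | a :: α, u =>
    if (∀ β, Unw dm P u α β → Unw dm P (dm a) α β → P β (dm a) u) then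
      TATree.node (taB dm P α u) (taB dm P α (dm a)) a
    else taB dm P α u

lemma taD_key {D A : Type} (dm : A → D) (P : List A → D → D → Prop) :
    ∀ n u (α β : List A), α.length + β.length ≤ n →
      taD dm P α u = taD dm P β u → Unw dm P u α β := by
  intro n
  induction n with
  | zero =>
    intro u α β hlen _
    have hα : α = [] := List.eq_nil_of_length_eq_zero (by omega)
    have hβ : β = [] := List.eq_nil_of_length_eq_zero (by omega)
    subst hα; subst hβ; exact Unw.refl u []
  | succ n ih =>
    intro u α β hlen heq
    match α, β with
    | [], [] => exact Unw.refl u []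
    | [], b :: β' =>
      simp only [taD] at heq
      by_cases hb : P β' (dm b) u
      · rw [if_pos hb] at heq; exact absurd heq (by simp)
      · rw [if_neg hb] at heq
        have h1 : Unw dm P u [] β' := ih u [] β' (by simp at hlen ⊢; omega) heq
        exact h1.trans (Unw.symm (Unw.dlr u β' b hb))
    | a :: α', [] =>
      simp only [taD] at heq
      by_cases ha : P α' (dm a) u
      · rw [if_pos ha] at heq; exact absurd heq (by simp)
      · rw [if_neg ha] at heq
        have h1 : Unw dm P u α' [] := ih u α' [] (by simp at hlen ⊢; omega) heq
        exact (Unw.dlr u α' a ha).trans h1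
    | a :: α', b :: β' =>
      simp only [taD] at heq
      by_cases ha : P α' (dm a) u <;> by_cases hb : P β' (dm b) u
      · rw [if_pos ha, if_pos hb] at heq
        injection heq with h1 h2 h3
        subst h3
        have hu : Unw dm P u α' β' := ih u α' β' (by simp at hlen ⊢; omega) h1
        have hd : Unw dm P (dm a) α' β' := ih (dm a) α' β' (by simp at hlen ⊢; omega) h2
        exact Unw.wsc u a hu hd
      · rw [if_pos ha, if_neg hb] at heq
        have h1 : Unw dm P u (a :: α') β' :=
          ih u (a :: α') β' (by simp at hlen ⊢; omega) (by simp [taD, if_pos ha, heq])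
        exact h1.trans (Unw.symm (Unw.dlr u β' b hb))
      · rw [if_neg ha, if_pos hb] at heq
        have h1 : Unw dm P u α' (b :: β') :=
          ih u α' (b :: β') (by simp at hlen ⊢; omega) (by simp [taD, if_pos hb, heq])
        exact (Unw.dlr u α' a ha).trans h1
      · rw [if_neg ha, if_neg hb] at heq
        have h1 : Unw dm P u α' β' := ih u α' β' (by simp at hlen ⊢; omega) heq
        exact ((Unw.dlr u α' a ha).trans h1).trans (Unw.symm (Unw.dlr u β' b hb))

/-- equal `ta^◇` values imply unwinding equivalence; consequently
`ta^□`-security implies `ta^◇`-security. -/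
theorem statement_4 {D A : Type} (dm : A → D) (P : List A → D → D → Prop)
    (hrefl : ∀ α u, P α u u) :
    (∀ u (α β : List A), taD dm P α u = taD dm P β u → Unw dm P u α β) ∧
    (∀ (S O : Type) (step : S → A → S) (s0 : S) (obs : D → S → O),
      (∀ u (α β : List A), Unw dm P u α β →
          obs u (runL step s0 α) = obs u (runL step s0 β)) →
      ∀ u (α β : List A), taD dm P α u = taD dm P β u →
          obs u (runL step s0 α) = obs u (runL step s0 β)) := by
  have key := fun u (α β : List A) h => taD_key dm P (α.length + β.length) u α β le_rfl h
  exact ⟨key, fun S O step s0 obs hsec u α β h => hsec u α β (key u α β h)⟩
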